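/- Let k be a positive semidefinite kernel on a set S with k(x,x) ≤ 1 for all x ∈ S, let x_1, …, x_T ∈ S and σ > 0, and define the GP posterior variance σ_t²(s) for 0 ≤ t ≤ T as in the context. Then the cumulative predictive variance is bounded by a constant multiple of the information gain: Σ_{t=1}^{T} σ_{t−1}²(x_t) ≤ (1 + σ²) · log det( I_T + σ^{−2} K_T ), i.e., Σ_{t=1}^{T} σ_{t−1}²(x_t) ≤ C_σ · γ_T with C_σ = 2(1 + σ²) and γ_T = (1/2)·log det(I_T + σ^{−2} K_T). -/

import Mathlib

open Matrix

/-- A symmetric positive semidefinite kernel on a set `S`: symmetric, and every finite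
Gram matrix is positive semidefinite. -/
def IsPSDKernel {S : Type*} (k : S → S → ℝ) : Prop :=
  (∀ x y, k x y = k y x) ∧
    ∀ (n : ℕ) (x : Fin n → S), (Matrix.of fun i j => k (x i) (x j)).PosSemidef

/-- Regularized Gram matrix `K_t + σ² I` of the first `t` points. -/
noncomputable def gramReg {S : Type*} (k : S → S → ℝ) (σ : ℝ) {T : ℕ} (x : Fin T → S)
    (t : ℕ) (ht : t ≤ T) : Matrix (Fin t) (Fin t) ℝ :=
  (Matrix.of fun i j => k (x (Fin.castLE ht i)) (x (Fin.castLE ht j)))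
    + σ ^ 2 • (1 : Matrix (Fin t) (Fin t) ℝ)

/-- Kernel vector `k_t(s)` between a point `s` and the first `t` points. -/
noncomputable def kvec {S : Type*} (k : S → S → ℝ) {T : ℕ} (x : Fin T → S)
    (t : ℕ) (ht : t ≤ T) (s : S) : Fin t → ℝ :=
  fun i => k s (x (Fin.castLE ht i))

/-- GP posterior covariance `c_t(s,s') = k(s,s') − k_t(s)ᵀ(K_t+σ²I)⁻¹k_t(s')` after
conditioning on the first `t` points. -/
noncomputable def postCov {S : Type*} (k : S → S → ℝ) (σ : ℝ) {T : ℕ} (x : Fin T → S)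
    (t : ℕ) (ht : t ≤ T) (s s' : S) : ℝ :=
  k s s' - kvec k x t ht s ⬝ᵥ ((gramReg k σ x t ht)⁻¹ *ᵥ kvec k x t ht s')

/-- GP posterior variance `σ_t²(s) = k(s,s) − k_t(s)ᵀ(K_t+σ²I)⁻¹k_t(s)` after
conditioning on the first `t` points (so `σ_0²(s) = k(s,s)`). -/
noncomputable def postVar {S : Type*} (k : S → S → ℝ) (σ : ℝ) {T : ℕ} (x : Fin T → S)
    (t : ℕ) (ht : t ≤ T) (s : S) : ℝ :=
  postCov k σ x t ht s s

section Aux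

variable {S : Type*} {k : S → S → ℝ} {σ : ℝ} {T : ℕ} {x : Fin T → S}

lemma gramReg_posDef (hk : IsPSDKernel k) (hσ : 0 < σ) (t : ℕ) (ht : t ≤ T) :
    (gramReg k σ x t ht).PosDef := by
  have h1 := hk.2 t (fun i => x (Fin.castLE ht i))
  have h2 : (σ ^ 2 • (1 : Matrix (Fin t) (Fin t) ℝ)).PosDef := by
    rw [Matrix.smul_one_eq_diagonal]
    exact Matrix.posDef_diagonal_iff.mpr (fun _ => by positivity)
  exact Matrix.PosDef.posSemidef_add h1 h2

lemma gramReg_succ_eq (hk : IsPSDKernel k) (t : ℕ) (ht : t + 1 ≤ T) :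
    gramReg k σ x (t+1) ht =
      (Matrix.fromBlocks (gramReg k σ x t (t.le_succ.trans ht))
          (Matrix.of fun i (_ : Fin 1) => k (x (Fin.castLE (t.le_succ.trans ht) i)) (x ⟨t, ht⟩))
          (Matrix.of fun i (_ : Fin 1) => k (x (Fin.castLE (t.le_succ.trans ht) i)) (x ⟨t, ht⟩))ᴴ
          (Matrix.of fun _ _ => k (x ⟨t, ht⟩) (x ⟨t, ht⟩) + σ ^ 2)).submatrix
        finSumFinEquiv.symm finSumFinEquiv.symm := by
  have e1 : ∀ i : Fin t, Fin.castLE ht (Fin.castAdd 1 i)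
      = Fin.castLE (t.le_succ.trans ht) i := by
    intro i; ext; simp
  have e2 : ∀ j : Fin 1, Fin.castLE ht (Fin.natAdd t j) = ⟨t, ht⟩ := by
    intro j; ext; simp [Fin.val_eq_zero]
  ext p q
  obtain ⟨a, rfl⟩ := finSumFinEquiv.surjective p
  obtain ⟨b, rfl⟩ := finSumFinEquiv.surjective q
  rcases a with i | i <;> rcases b with j | j
  · simp [gramReg, Matrix.fromBlocks, e1, e2, Matrix.one_apply, Equiv.apply_eq_iff_eq]
  · simp [gramReg, Matrix.fromBlocks, e1, e2, Matrix.one_apply, Fin.ext_iff]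
    omega
  · have hne : ¬ (t = (j : ℕ)) := by omega
    simp [gramReg, Matrix.fromBlocks, e1, e2, Matrix.one_apply,
      Matrix.conjTranspose_apply, Fin.ext_iff, hne]
    exact hk.1 _ _
  · have hij : i = j := Subsingleton.elim i j
    subst hij
    simp [gramReg, Matrix.fromBlocks, e2, Matrix.one_apply]
lemma quad_entry {t : ℕ} (M : Matrix (Fin t) (Fin t) ℝ) (v : Fin t → ℝ) :
    (((Matrix.of fun i (_ : Fin 1) => v i)ᴴ * M) * (Matrix.of fun i (_ : Fin 1) => v i)) 0 0
      = v ⬝ᵥ (M *ᵥ v) := by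
  simp only [Matrix.mul_apply, Matrix.mulVec, dotProduct, Matrix.conjTranspose_apply,
    Matrix.of_apply, star_trivial, Finset.sum_mul, Finset.mul_sum]
  rw [Finset.sum_comm]
  exact Finset.sum_congr rfl fun i _ => Finset.sum_congr rfl fun j _ => by ring

lemma psd_one_entry {M : Matrix (Fin 1) (Fin 1) ℝ} (h : M.PosSemidef) : 0 ≤ M 0 0 := by
  have := h.dotProduct_mulVec_nonneg (fun _ => 1)
  simpa [dotProduct, Matrix.mulVec, Fin.sum_univ_one] using this

lemma det_gramReg_succ (hk : IsPSDKernel k) (hσ : 0 < σ) (t : ℕ) (ht : t + 1 ≤ T) :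
    (gramReg k σ x (t+1) ht).det
      = (gramReg k σ x t (t.le_succ.trans ht)).det
          * (σ ^ 2 + postVar k σ x t (t.le_succ.trans ht) (x ⟨t, ht⟩)) := by
  have hA := gramReg_posDef (x := x) hk hσ t (t.le_succ.trans ht)
  haveI : Invertible (gramReg k σ x t (t.le_succ.trans ht)) :=
    Matrix.invertibleOfIsUnitDet _ (isUnit_iff_ne_zero.mpr hA.det_pos.ne')
  rw [gramReg_succ_eq hk t ht, Matrix.det_submatrix_equiv_self, Matrix.det_fromBlocks₁₁]
  congr 1
  rw [Matrix.det_fin_one, invOf_eq_nonsing_inv, Matrix.sub_apply, quad_entry]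
  have hv : (fun i => k (x (Fin.castLE (t.le_succ.trans ht) i)) (x ⟨t, ht⟩))
      = kvec k x t (t.le_succ.trans ht) (x ⟨t, ht⟩) := funext fun i => hk.1 _ _
  rw [hv]
  simp only [postVar, postCov, Matrix.of_apply]
  ring

lemma postVar_nonneg (hk : IsPSDKernel k) (hσ : 0 < σ) (t : ℕ) (ht : t + 1 ≤ T) :
    0 ≤ postVar k σ x t (t.le_succ.trans ht) (x ⟨t, ht⟩) := by
  set xt := x ⟨t, ht⟩ with hxt
  have hA := gramReg_posDef (x := x) hk hσ t (t.le_succ.trans ht)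
  haveI : Invertible (gramReg k σ x t (t.le_succ.trans ht)) :=
    Matrix.invertibleOfIsUnitDet _ (isUnit_iff_ne_zero.mpr hA.det_pos.ne')
  have e1 : ∀ i : Fin t, Fin.castLE ht (Fin.castAdd 1 i)
      = Fin.castLE (t.le_succ.trans ht) i := by
    intro i; ext; simp
  have e2 : ∀ j : Fin 1, Fin.castLE ht (Fin.natAdd t j) = ⟨t, ht⟩ := by
    intro j; ext; simp [Fin.val_eq_zero]
  have hsplit : Matrix.fromBlocks (gramReg k σ x t (t.le_succ.trans ht))
        (Matrix.of fun i (_ : Fin 1) => k (x (Fin.castLE (t.le_succ.trans ht) i)) xt)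
        (Matrix.of fun i (_ : Fin 1) => k (x (Fin.castLE (t.le_succ.trans ht) i)) xt)ᴴ
        (Matrix.of fun _ _ => k xt xt)
      = (Matrix.of fun i j => k (x (Fin.castLE ht i)) (x (Fin.castLE ht j))).submatrix
          finSumFinEquiv finSumFinEquiv
        + (Matrix.diagonal fun p : Fin (t+1) => if (p : ℕ) < t then σ ^ 2 else 0).submatrix
            finSumFinEquiv finSumFinEquiv := by
    ext a b
    rcases a with i | i <;> rcases b with j | j
    · have h' : ((Fin.castAdd 1 i : Fin (t+1)) : ℕ) < t := i.isLt
      simp [gramReg, Matrix.fromBlocks, e1, e2, Matrix.one_apply, Matrix.diagonal_apply,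
        Fin.ext_iff, h']
    · have hne : ¬ ((Fin.castAdd 1 i : Fin (t+1)) = Fin.natAdd t j) := by
        simp [Fin.ext_iff]; omega
      simp [Matrix.fromBlocks, e1, e2, Matrix.diagonal_apply, hne]
      rfl
    · have hne : ¬ ((Fin.natAdd t i : Fin (t+1)) = Fin.castAdd 1 j) := by
        simp [Fin.ext_iff]; omega
      simp [Matrix.fromBlocks, e1, e2, Matrix.diagonal_apply, Matrix.conjTranspose_apply, hne]
      exact hk.1 _ _
    · have hij : i = j := Subsingleton.elim i j
      subst hij
      simp [Matrix.fromBlocks, e2, Matrix.diagonal_apply]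
      rfl
  have h1 := (hk.2 (t+1) (fun i => x (Fin.castLE ht i))).submatrix
    (finSumFinEquiv (m := t) (n := 1))
  have hd : ∀ p : Fin (t+1), 0 ≤ (if (p : ℕ) < t then σ ^ 2 else 0 : ℝ) := by
    intro p; split <;> positivity
  have h2 := (Matrix.posSemidef_diagonal_iff.mpr hd).submatrix (finSumFinEquiv (m := t) (n := 1))
  have hN := hsplit ▸ (h1.add h2)
  have hS := (Matrix.PosDef.fromBlocks₁₁ _ _ hA).mp hN
  have key := psd_one_entry hS
  rw [Matrix.sub_apply, quad_entry] at key
  have hv : (fun i => k (x (Fin.castLE (t.le_succ.trans ht) i)) xt)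
      = kvec k x t (t.le_succ.trans ht) xt := funext fun i => hk.1 _ _
  rw [hv] at key
  simpa [postVar, postCov] using key

lemma postVar_le_one (hk : IsPSDKernel k) (hk1 : ∀ y : S, k y y ≤ 1) (hσ : 0 < σ)
    (t : ℕ) (ht : t ≤ T) (s : S) : postVar k σ x t ht s ≤ 1 := by
  have hA := gramReg_posDef (x := x) hk hσ t ht
  have h := hA.inv.posSemidef.dotProduct_mulVec_nonneg (kvec k x t ht s)
  simp only [star_trivial, Pi.star_apply] at h
  have h2 : postVar k σ x t ht s ≤ k s s := by
    simp only [postVar, postCov]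
    linarith
  exact h2.trans (hk1 s)

lemma det_gramReg_eq_prod (hk : IsPSDKernel k) (hσ : 0 < σ) :
    ∀ (t : ℕ) (ht : t ≤ T),
      (gramReg k σ x t ht).det
        = ∏ i : Fin t, (σ ^ 2 + postVar k σ x i.val (le_trans i.isLt.le ht)
            (x (Fin.castLE ht i)))
  | 0, ht => by simp
  | (t+1), ht => by
      rw [det_gramReg_succ hk hσ t ht, det_gramReg_eq_prod hk hσ t (t.le_succ.trans ht),
        Fin.prod_univ_castSucc]
      congr 1
lemma key_scalar (hσ : 0 < σ) {z : ℝ} (h0 : 0 ≤ z) (h1 : z ≤ 1) :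
    z ≤ (1 + σ ^ 2) * Real.log (1 + z / σ ^ 2) := by
  have hσ2 : (0:ℝ) < σ ^ 2 := by positivity
  have hpos : (0:ℝ) < 1 + z / σ ^ 2 := by positivity
  have hlog := Real.one_sub_inv_le_log_of_pos hpos
  have hd : (0:ℝ) < σ ^ 2 + z := by positivity
  have hinv : 1 - (1 + z / σ ^ 2)⁻¹ = z / (σ ^ 2 + z) := by
    rw [inv_eq_one_div]
    field_simp
    ring
  rw [hinv] at hlog
  have h2 : z ≤ (1 + σ ^ 2) * (z / (σ ^ 2 + z)) := by
    rw [mul_div_assoc', le_div_iff₀ hd]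
    nlinarith
  exact h2.trans (mul_le_mul_of_nonneg_left hlog (by positivity))

end Aux

/-- Variance–information gain lemma: if `k(x,x) ≤ 1` for all `x`, then
`Σ_{t=1}^T σ_{t−1}²(x_t) ≤ (1 + σ²)·log det(I_T + σ⁻² K_T)`, i.e. the cumulative
predictive variance is at most `C_σ · γ_T` with `C_σ = 2(1 + σ²)` and
`γ_T = (1/2)·log det(I_T + σ⁻² K_T)`. -/
theorem stmt12 {S : Type*} (k : S → S → ℝ) (hk : IsPSDKernel k)
    (hk1 : ∀ x : S, k x x ≤ 1)
    (σ : ℝ) (hσ : 0 < σ) (T : ℕ) (x : Fin T → S) :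
    ∑ i : Fin T, postVar k σ x i.val i.isLt.le (x i)
      ≤ (1 + σ ^ 2) *
        Real.log
          ((1 : Matrix (Fin T) (Fin T) ℝ)
            + (σ ^ 2)⁻¹ • Matrix.of fun i j => k (x i) (x j)).det ∧
    ∑ i : Fin T, postVar k σ x i.val i.isLt.le (x i)
      ≤ (2 * (1 + σ ^ 2)) *
        ((1 / 2) *
          Real.log
            ((1 : Matrix (Fin T) (Fin T) ℝ)
              + (σ ^ 2)⁻¹ • Matrix.of fun i j => k (x i) (x j)).det) := by
  have hσ2 : (0:ℝ) < σ ^ 2 := by positivity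
  set z : Fin T → ℝ := fun i => postVar k σ x i.val i.isLt.le (x i) with hz
  have hz0 : ∀ i : Fin T, 0 ≤ z i := fun i =>
    postVar_nonneg (x := x) hk hσ i.val i.isLt
  have hz1 : ∀ i : Fin T, z i ≤ 1 := fun i =>
    postVar_le_one (x := x) hk hk1 hσ i.val i.isLt.le (x i)
  have hM : (1 : Matrix (Fin T) (Fin T) ℝ)
        + (σ ^ 2)⁻¹ • (Matrix.of fun i j => k (x i) (x j))
      = (σ ^ 2)⁻¹ • gramReg k σ x T le_rfl := by
    show _ = (σ ^ 2)⁻¹ • ((Matrix.of fun i j => k (x i) (x j))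
      + σ ^ 2 • (1 : Matrix (Fin T) (Fin T) ℝ))
    rw [smul_add, smul_smul, inv_mul_cancel₀ hσ2.ne', one_smul, add_comm]
  have hdet : ((1 : Matrix (Fin T) (Fin T) ℝ)
        + (σ ^ 2)⁻¹ • (Matrix.of fun i j => k (x i) (x j))).det
      = ∏ i : Fin T, (1 + z i / σ ^ 2) := by
    rw [hM, Matrix.det_smul, det_gramReg_eq_prod hk hσ T le_rfl, Fintype.card_fin]
    have hc : ((σ ^ 2)⁻¹ : ℝ) ^ T = ∏ _i : Fin T, ((σ ^ 2)⁻¹ : ℝ) := by simp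
    rw [hc, ← Finset.prod_mul_distrib]
    refine Finset.prod_congr rfl fun i _ => ?_
    show (σ ^ 2)⁻¹ * (σ ^ 2 + z i) = 1 + z i / σ ^ 2
    field_simp
  have hfac : ∀ i : Fin T, (0:ℝ) < 1 + z i / σ ^ 2 := fun i => by
    have := hz0 i; positivity
  have hlogdet : Real.log ((1 : Matrix (Fin T) (Fin T) ℝ)
        + (σ ^ 2)⁻¹ • (Matrix.of fun i j => k (x i) (x j))).det
      = ∑ i : Fin T, Real.log (1 + z i / σ ^ 2) := by
    rw [hdet]
    exact Real.log_prod fun i _ => (hfac i).ne'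
  have hmain : ∑ i : Fin T, z i
      ≤ (1 + σ ^ 2) * Real.log ((1 : Matrix (Fin T) (Fin T) ℝ)
          + (σ ^ 2)⁻¹ • (Matrix.of fun i j => k (x i) (x j))).det := by
    rw [hlogdet, Finset.mul_sum]
    exact Finset.sum_le_sum fun i _ => key_scalar hσ (hz0 i) (hz1 i)
  refine ⟨hmain, ?_⟩
  calc ∑ i : Fin T, z i ≤ _ := hmain
    _ = _ := by ring
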